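/- Let X be a geodesic Peano continuum that is semi-locally simply connected, and (X̃, d) its path space with the length-infimum metric. For any [α] ∈ X̃ and any path β in X starting at α(1), the canonical lift t ↦ [α ∗ (β|_{[0,t]})] of a geodesic β in X is a geodesic in X̃. -/

import Mathlib

open Metric Set ENNReal NNReal

noncomputable section

/-- Arc length of a path in a pseudo-metric space, valued in `ℝ≥0∞`. -/
def pathLen {X : Type*} [PseudoMetricSpace X] {x y : X} (γ : Path x y) : ℝ≥0∞ :=
  eVariationOn γ Set.univ

/-- A metric space is geodesic if any two points are joined by a path whose
length equals their distance. -/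
def IsGeodesicSpace (X : Type*) [MetricSpace X] : Prop :=
  ∀ x y : X, ∃ γ : Path x y, pathLen γ = ENNReal.ofReal (dist x y)

/-- Semi-local simple connectedness: every point has a neighborhood `U` such
that every loop contained in `U` is null-homotopic in `X`. -/
def SemiLocallySimplyConnected (X : Type*) [TopologicalSpace X] : Prop :=
  ∀ x : X, ∃ U ∈ nhds x, ∀ γ : Path x x, Set.range γ ⊆ U → γ.Homotopic (Path.refl x)

/-- A group is finitely presented. -/
def Group.FinitelyPresented (G : Type*) [Group G] : Prop :=
  ∃ (n : ℕ) (rels : Set (FreeGroup (Fin n))), rels.Finite ∧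
    Nonempty (PresentedGroup rels ≃* G)

/-- The space of homotopy-rel-endpoints classes of paths starting at `x₀`. -/
@[reducible] def PathsFrom {X : Type*} [TopologicalSpace X] (x₀ : X) : Type _ :=
  Σ y : X, Path.Homotopic.Quotient x₀ y

/-- The length-infimum distance on `PathsFrom x₀`, valued in `ℝ≥0∞`:
the infimum of lengths of paths `γ` from `α(1)` to `β(1)` such that
`α ∗ γ` is homotopic rel endpoints to `β`. -/
def dTilde {X : Type*} [MetricSpace X] {x₀ : X} (a b : PathsFrom x₀) : ℝ≥0∞ :=
  ⨅ γ : {γ : Path a.1 b.1 // Path.Homotopic.Quotient.trans a.2 (Path.Homotopic.Quotient.mk γ) = b.2}, pathLen γ.1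

/-- The endpoint projection `X̃ → X`. -/
def endpointProj {X : Type*} [TopologicalSpace X] {x₀ : X} (a : PathsFrom x₀) : X := a.1

/-- The action of a class of a loop `β` at `x₀` on `PathsFrom x₀`, sending `[α]` to `[β ∗ α]`. -/
def loopAct {X : Type*} [TopologicalSpace X] {x₀ : X}
    (g : Path.Homotopic.Quotient x₀ x₀) (a : PathsFrom x₀) : PathsFrom x₀ :=
  ⟨a.1, Path.Homotopic.Quotient.trans g a.2⟩

/-- Uniform path connectedness. -/
def UniformlyPathConnected (X : Type*) [MetricSpace X] : Prop :=
  ∃ α : ℝ → ℝ, ∀ x y : X, x ≠ y →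
    ∃ γ : Path x y, Metric.diam (Set.range γ) ≤ α (dist x y)

/-- `π₁(X, x₀)` is uniformly generated: for some `R > 0` it is generated by
classes of loops of diameter at most `R`, conjugated to the basepoint by arbitrary paths. -/
def UniformlyGeneratedPi1 (X : Type*) [MetricSpace X] (x₀ : X) : Prop :=
  ∃ R : ℝ, 0 < R ∧ Subgroup.closure
    {g : FundamentalGroup X x₀ | ∃ (y : X) (p : Path x₀ y) (γ : Path y y),
      Metric.diam (Set.range γ) ≤ R ∧
      g = FundamentalGroup.fromPath (X := TopCat.of X) ⟦(p.trans γ).trans p.symm⟧} = ⊤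

/-- A list of points of `X` is an `r`-chain: consecutive points are at distance at most `r`. -/
def IsChain' {X : Type*} [MetricSpace X] (r : ℝ) : List X → Prop :=
  List.Chain' (fun x y => dist x y ≤ r)

/-- An elementary move at scale `R` between based chains: insertion of one interior
point, with both chains being `R`-chains. -/
def ChainMove {X : Type*} [MetricSpace X] (R : ℝ) (l₁ l₂ : List X) : Prop :=
  ∃ (p q : List X) (x : X), p ≠ [] ∧ q ≠ [] ∧
    l₁ = p ++ q ∧ l₂ = p ++ x :: q ∧ IsChain' R l₁ ∧ IsChain' R l₂

/-- A based `r`-loop is `R`-null-homotopic: it can be reduced to the trivial loop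
by elementary moves at scale `R`. -/
def ChainNull {X : Type*} [MetricSpace X] (R : ℝ) (x₀ : X) (l : List X) : Prop :=
  Relation.ReflTransGen (fun a b => ChainMove R a b ∨ ChainMove R b a) l [x₀, x₀]

/-- Coarse 1-connectedness of a metric space, via chains (edge-paths in Rips
complexes): `X` is `t`-chain connected for some `t > 0`, and every `r`-loop can
be filled at some uniformly larger scale `R`. -/
def CoarselySimplyConnected (X : Type*) [MetricSpace X] : Prop :=
  (∃ t : ℝ, 0 < t ∧ ∀ x y : X, ∃ l : List X, IsChain' t l ∧
      l.head? = some x ∧ l.getLast? = some y) ∧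
  ∀ r : ℝ, 0 < r → ∃ R : ℝ, r ≤ R ∧ ∀ (x₀ : X) (l : List X),
    IsChain' r l → l.head? = some x₀ → l.getLast? = some x₀ → ChainNull R x₀ l

end


open unitInterval

section Aux

lemma univI : (Set.univ : Set I) = Set.Icc 0 1 := by
  ext t
  simp only [Set.mem_univ, Set.mem_Icc, true_iff]
  exact ⟨t.2.1, t.2.2⟩

lemma ennreal_middle_eq {x1 x2 x3 y1 y2 y3 : ℝ≥0∞} (h1 : x1 ≤ y1) (h2 : x2 ≤ y2) (h3 : x3 ≤ y3)
    (h : y1 + y2 + y3 ≤ x1 + x2 + x3) (htop : y1 + y2 + y3 ≠ ⊤) : y2 = x2 := by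
  have hy1 : y1 ≠ ⊤ := fun e => htop (by simp [e])
  have hy3 : y3 ≠ ⊤ := fun e => htop (by simp [e])
  refine le_antisymm ?_ h2
  have h' : y1 + y2 + y3 ≤ y1 + x2 + y3 := h.trans (by gcongr)
  have h'' : y1 + (y2 + y3) ≤ y1 + (x2 + y3) := by
    rw [← add_assoc, ← add_assoc]; exact h'
  have := (ENNReal.add_le_add_iff_left hy1).mp h''
  exact (ENNReal.add_le_add_iff_right hy3).mp this

/-- Subsegment of a geodesic: the variation on `[s,t]` equals the distance of endpoints. -/
lemma geodesic_seg {X : Type*} [MetricSpace X] {x z : X} (β : Path x z)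
    (hβ : eVariationOn β Set.univ = ENNReal.ofReal (dist x z)) {s t : I} (hst : s ≤ t) :
    eVariationOn β (Set.Icc s t) = ENNReal.ofReal (dist (β s) (β t)) := by
  have e1 : eVariationOn β (Set.Icc (0:I) s) + eVariationOn β (Set.Icc s t)
      = eVariationOn β (Set.Icc (0:I) t) := by
    have := eVariationOn.Icc_add_Icc β (s := (Set.univ : Set I))
      (unitInterval.nonneg' (t := s)) hst (Set.mem_univ s)
    simpa using this
  have e2 : eVariationOn β (Set.Icc (0:I) t) + eVariationOn β (Set.Icc t 1)
      = eVariationOn β (Set.Icc (0:I) 1) := by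
    have := eVariationOn.Icc_add_Icc β (s := (Set.univ : Set I))
      (unitInterval.nonneg' (t := t)) (unitInterval.le_one' (t := t)) (Set.mem_univ t)
    simpa using this
  have etot : eVariationOn β (Set.Icc (0:I) s) + eVariationOn β (Set.Icc s t)
      + eVariationOn β (Set.Icc t 1) = ENNReal.ofReal (dist x z) := by
    rw [e1, e2, ← univI, hβ]
  have l1 : ENNReal.ofReal (dist x (β s)) ≤ eVariationOn β (Set.Icc (0:I) s) := by
    have := eVariationOn.edist_le β (Set.left_mem_Icc.2 (unitInterval.nonneg' (t := s)))
      (Set.right_mem_Icc.2 (unitInterval.nonneg' (t := s)))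
    rwa [β.source, edist_dist] at this
  have l2 : ENNReal.ofReal (dist (β s) (β t)) ≤ eVariationOn β (Set.Icc s t) := by
    have := eVariationOn.edist_le β (Set.left_mem_Icc.2 hst) (Set.right_mem_Icc.2 hst)
    rwa [edist_dist] at this
  have l3 : ENNReal.ofReal (dist (β t) z) ≤ eVariationOn β (Set.Icc t (1:I)) := by
    have := eVariationOn.edist_le β (Set.left_mem_Icc.2 (unitInterval.le_one' (t := t)))
      (Set.right_mem_Icc.2 (unitInterval.le_one' (t := t)))
    rwa [β.target, edist_dist] at this
  have tri : ENNReal.ofReal (dist x z)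
      ≤ ENNReal.ofReal (dist x (β s)) + ENNReal.ofReal (dist (β s) (β t))
        + ENNReal.ofReal (dist (β t) z) := by
    rw [← ENNReal.ofReal_add dist_nonneg dist_nonneg,
        ← ENNReal.ofReal_add (by positivity) dist_nonneg]
    exact ENNReal.ofReal_le_ofReal (dist_triangle4 x (β s) (β t) z)
  exact ennreal_middle_eq l1 l2 l3 (by rw [etot]; exact tri)
    (by rw [etot]; exact ENNReal.ofReal_ne_top)

/-- Variation is monotone under pointwise shrinking of distances. -/
lemma eVariationOn_le_of_edist_le {α E F : Type*} [LinearOrder α] [PseudoEMetricSpace E]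
    [PseudoEMetricSpace F] {f : α → E} {g : α → F} {s : Set α}
    (h : ∀ x ∈ s, ∀ y ∈ s, edist (f x) (f y) ≤ edist (g x) (g y)) :
    eVariationOn f s ≤ eVariationOn g s := by
  refine iSup_le fun p => le_iSup_of_le p ?_
  exact Finset.sum_le_sum fun i _ => h _ (p.2.2.2 _) _ (p.2.2.2 _)

/-- Length of a truncation is at most the variation of the path on the corresponding segment. -/
lemma trunc_len_le {X : Type*} [MetricSpace X] {x z : X} (β : Path x z) {s t : I}
    (hst : s ≤ t) :
    eVariationOn (β.truncate (s:ℝ) (t:ℝ)) Set.univ ≤ eVariationOn β (Set.Icc s t) := by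
  have hst' : (s:ℝ) ≤ (t:ℝ) := hst
  have hcoe : ⇑(β.truncate (s:ℝ) (t:ℝ))
      = ⇑β ∘ (fun u : I => Set.projIcc 0 1 zero_le_one (min (max ↑u ↑s) ↑t)) := rfl
  rw [hcoe]
  refine eVariationOn.comp_le_of_monotoneOn β _ ?_ ?_
  · intro u _ v _ huv
    exact Set.monotone_projIcc zero_le_one
      (min_le_min (max_le_max (Subtype.coe_le_coe.2 huv) le_rfl) le_rfl)
  · intro u _
    have hv : min (max (u:ℝ) ↑s) ↑t ∈ Set.Icc (0:ℝ) 1 :=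
      ⟨le_min (le_trans s.2.1 (le_max_right _ _)) t.2.1,
        min_le_of_right_le t.2.2⟩
    show Set.projIcc 0 1 zero_le_one _ ∈ Set.Icc s t
    rw [Set.projIcc_of_mem zero_le_one hv]
    exact ⟨Subtype.coe_le_coe.1 (le_min (le_max_right _ _) hst'),
      Subtype.coe_le_coe.1 (min_le_right _ _)⟩

lemma quot_comp_assoc {X : Type*} [TopologicalSpace X] {w x y z : X}
    (p : Path.Homotopic.Quotient w x) (q : Path.Homotopic.Quotient x y)
    (r : Path.Homotopic.Quotient y z) :
    Path.Homotopic.Quotient.trans (Path.Homotopic.Quotient.trans p q) r = Path.Homotopic.Quotient.trans p (Path.Homotopic.Quotient.trans q r) := by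
  exact Path.Homotopic.Quotient.trans_assoc p q r

lemma quot_comp_refl {X : Type*} [TopologicalSpace X] {x y : X}
    (q : Path.Homotopic.Quotient x y) : Path.Homotopic.Quotient.trans q (Path.Homotopic.Quotient.mk (Path.refl y)) = q := by
  rw [Path.Homotopic.Quotient.mk_refl]
  exact Path.Homotopic.Quotient.trans_refl q

lemma quot_transport {X : Type*} [TopologicalSpace X] {x y z z' : X} (h : z = z')
    (q : Path.Homotopic.Quotient x y) (r : Path.Homotopic.Quotient y z) :
    h ▸ (Path.Homotopic.Quotient.trans q r) = Path.Homotopic.Quotient.trans q (h ▸ r) := by subst h; rfl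

lemma quot_transport_mk {X : Type*} [TopologicalSpace X] {y z z' : X} (h : z = z')
    (p : Path y z) : h ▸ (Path.Homotopic.Quotient.mk p : Path.Homotopic.Quotient y z) = Path.Homotopic.Quotient.mk (p.cast rfl h.symm) := by
  subst h
  congr 1

lemma sigma_mk_eq {X : Type*} [TopologicalSpace X] {x₀ y y' : X} (h : y = y')
    (q : Path.Homotopic.Quotient x₀ y) :
    (⟨y, q⟩ : PathsFrom x₀) = ⟨y', h ▸ q⟩ := by subst h; rfl

theorem homotopic_of_extend_param {X : Type*} [TopologicalSpace X] {x y a b : X}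
    (γ : Path x y) {f g : I → ℝ} (hf : Continuous f) (hg : Continuous g)
    (p q : Path a b) (hp : ∀ i, p i = γ.extend (f i)) (hq : ∀ i, q i = γ.extend (g i))
    (h0 : f 0 = g 0) (h1 : f 1 = g 1) : p.Homotopic q := by
  refine ⟨⟨⟨⟨fun ui => γ.extend ((1 - (ui.1 : ℝ)) * f ui.2 + (ui.1 : ℝ) * g ui.2), ?_⟩, ?_, ?_⟩, ?_⟩⟩
  · exact γ.continuous_extend.comp <| by fun_prop
  · intro i; show γ.extend _ = p i; rw [hp i]; norm_num
  · intro i; show γ.extend _ = q i; rw [hq i]; norm_num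
  · rintro t i (rfl | rfl)
    · show γ.extend _ = p 0; rw [hp 0]; congr 1; rw [h0]; ring
    · show γ.extend _ = p 1; rw [hp 1, h1]; congr 1; ring

theorem trunc_trans_homotopic {X : Type*} [TopologicalSpace X] {x z : X} (β : Path x z)
    {s t : I} (hst : s ≤ t)
    (h1 : x = β.extend (min 0 ↑s)) (h2 : β.extend ↑s = β.extend (min ↑s ↑t))
    (h3 : x = β.extend (min 0 ↑t)) :
    (((β.truncate 0 ↑s).cast h1 rfl).trans ((β.truncate ↑s ↑t).cast h2 rfl)).Homotopic
      ((β.truncate 0 ↑t).cast h3 rfl) := by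
  have hst' : (s : ℝ) ≤ t := hst
  refine homotopic_of_extend_param β
    (f := fun i => if (i : ℝ) ≤ 1/2 then min (max (2 * ↑i) 0) ↑s else min (max (2 * ↑i - 1) ↑s) ↑t)
    (g := fun i => min (max ↑i 0) ↑t) ?_ ?_ _ _ ?_ ?_ ?_ ?_
  · apply Continuous.if_le
    · fun_prop
    · fun_prop
    · fun_prop
    · exact continuous_const
    · intro i hi
      rw [hi]
      norm_num
      rw [min_eq_right s.2.2, max_eq_right s.2.1, min_eq_left hst']
  · fun_prop
  · intro i
    rw [Path.trans_apply]
    split_ifs with h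
    · rfl
    · rfl
  · intro i
    rfl
  · rw [if_pos (by norm_num : ((0:I):ℝ) ≤ 1/2)]
    norm_num [min_eq_left s.2.1, min_eq_left t.2.1]
  · rw [if_neg (by norm_num : ¬ ((1:I):ℝ) ≤ 1/2)]
    norm_num [max_eq_left s.2.2]

lemma dTilde_ge_dist {X : Type*} [MetricSpace X] {x₀ : X} (a b : PathsFrom x₀) :
    ENNReal.ofReal (dist a.1 b.1) ≤ dTilde a b := by
  refine le_iInf fun γ => ?_
  have := eVariationOn.edist_le γ.1 (Set.mem_univ (0:I)) (Set.mem_univ 1)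
  rw [γ.1.source, γ.1.target, edist_dist] at this
  exact this

end Aux

set_option maxHeartbeats 2000000 in
theorem stmt7aux {X : Type*} [MetricSpace X] {x₀ : X}
    [m : MetricSpace (PathsFrom x₀)]
    (hm : ∀ a b : PathsFrom x₀, ENNReal.ofReal (dist a b) = dTilde a b)
    (a : PathsFrom x₀) (z : X) (β : Path a.1 z)
    (hβ : pathLen β = ENNReal.ofReal (dist a.1 z)) :
    ∃ L : Path a (⟨z, Path.Homotopic.Quotient.trans a.2 (Path.Homotopic.Quotient.mk β)⟩ : PathsFrom x₀),
      (∀ t : unitInterval, L t =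
        ⟨β.extend t, Path.Homotopic.Quotient.trans a.2
          (Path.Homotopic.Quotient.mk ((β.truncate 0 t).cast (by rw [min_eq_left t.2.1, Path.extend_zero]) rfl))⟩) ∧
      pathLen L = ENNReal.ofReal (dist a (⟨z, Path.Homotopic.Quotient.trans a.2 (Path.Homotopic.Quotient.mk β)⟩ : PathsFrom x₀)) := by
  have pf : ∀ t : I, a.1 = β.extend (min 0 ↑t) := fun t => by
    rw [min_eq_left t.2.1, Path.extend_zero]
  set F : I → PathsFrom x₀ := fun t =>
    ⟨β.extend ↑t, Path.Homotopic.Quotient.trans a.2 (Path.Homotopic.Quotient.mk ((β.truncate 0 ↑t).cast (pf t) rfl))⟩ with hF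
  -- upper bound on distances in the lift
  have hub : ∀ s t : I, s ≤ t →
      ENNReal.ofReal (dist (F s) (F t)) ≤ ENNReal.ofReal (dist (β s) (β t)) := by
    intro s t hst
    have hst' : (s:ℝ) ≤ (t:ℝ) := hst
    rw [hm]
    have hcast2 : β.extend ↑s = β.extend (min ↑s ↑t) := by rw [min_eq_left hst']
    have hkey : Path.Homotopic.Quotient.trans (F s).2 (Path.Homotopic.Quotient.mk ((β.truncate ↑s ↑t).cast hcast2 rfl)) = (F t).2 := by
      show Path.Homotopic.Quotient.trans (Path.Homotopic.Quotient.trans a.2 _) _ = Path.Homotopic.Quotient.trans a.2 _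
      rw [quot_comp_assoc]
      congr 1
      rw [← Path.Homotopic.Quotient.mk_trans]
      exact Path.Homotopic.Quotient.eq.2 (trunc_trans_homotopic β hst (pf s) hcast2 (pf t))
    calc dTilde (F s) (F t) ≤ pathLen ((β.truncate (s:ℝ) (t:ℝ)).cast hcast2 rfl) := by
          unfold dTilde
          exact iInf_le (fun γ : {γ : Path (F s).1 (F t).1 // Path.Homotopic.Quotient.trans (F s).2
            (Path.Homotopic.Quotient.mk γ) = (F t).2} => pathLen γ.1)
            ⟨(β.truncate (s:ℝ) (t:ℝ)).cast hcast2 rfl, hkey⟩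
      _ ≤ eVariationOn β (Set.Icc s t) := trunc_len_le β hst
      _ = ENNReal.ofReal (dist (β s) (β t)) := geodesic_seg β hβ hst
  have hdistb : ∀ s t : I, dist (F s) (F t) ≤ dist (β s) (β t) := by
    intro s t
    rcases le_total s t with h | h
    · exact (ENNReal.ofReal_le_ofReal_iff dist_nonneg).1 (hub s t h)
    · rw [dist_comm, dist_comm (β s)]
      exact (ENNReal.ofReal_le_ofReal_iff dist_nonneg).1 (hub t s h)
  have hcont : Continuous F := by
    rw [Metric.continuous_iff]
    intro b ε hε
    obtain ⟨δ, hδ, hb⟩ := Metric.continuous_iff.mp β.continuous_toFun b ε hε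
    exact ⟨δ, hδ, fun a' ha' => lt_of_le_of_lt (hdistb a' b) (hb a' ha')⟩
  -- endpoints
  have hsrc : F 0 = a := by
    have h0 : β.extend ((0:I):ℝ) = a.1 := by
      rw [show ((0:I):ℝ) = (0:ℝ) from rfl, Path.extend_zero]
    refine (sigma_mk_eq h0 _).trans ?_
    show (⟨a.1, h0 ▸ (Path.Homotopic.Quotient.trans a.2 _)⟩ : PathsFrom x₀) = ⟨a.1, a.2⟩
    refine congrArg (Sigma.mk a.1) ?_
    rw [quot_transport h0, quot_transport_mk h0]
    have hrefl : ((β.truncate 0 ((0:I):ℝ)).cast (pf 0) rfl).cast rfl h0.symm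
        = Path.refl a.1 := by
      ext u
      show β.extend (min (max (u:ℝ) 0) ((0:I):ℝ)) = a.1
      rw [show ((0:I):ℝ) = (0:ℝ) from rfl, min_eq_right (le_max_right _ _), Path.extend_zero]
    rw [hrefl, quot_comp_refl]
  have htgt : F 1 = (⟨z, Path.Homotopic.Quotient.trans a.2 (Path.Homotopic.Quotient.mk β)⟩ : PathsFrom x₀) := by
    have h1 : β.extend ((1:I):ℝ) = z := by
      rw [show ((1:I):ℝ) = (1:ℝ) from rfl, Path.extend_one]
    refine (sigma_mk_eq h1 _).trans ?_
    refine congrArg (Sigma.mk z) ?_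
    rw [quot_transport h1, quot_transport_mk h1]
    have hβeq : ((β.truncate 0 ((1:I):ℝ)).cast (pf 1) rfl).cast rfl h1.symm = β := by
      ext u
      show β.extend (min (max (u:ℝ) 0) ((1:I):ℝ)) = β u
      rw [show ((1:I):ℝ) = (1:ℝ) from rfl, max_eq_left u.2.1, min_eq_left u.2.2,
        Path.extend_extends']
    rw [hβeq]
  refine ⟨⟨⟨F, hcont⟩, hsrc, htgt⟩, fun t => rfl, ?_⟩
  -- the distance from a to the endpoint equals dist a.1 z
  have hdaz : ENNReal.ofReal (dist a (⟨z, Path.Homotopic.Quotient.trans a.2 (Path.Homotopic.Quotient.mk β)⟩ : PathsFrom x₀))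
      = ENNReal.ofReal (dist a.1 z) := by
    rw [hm]
    refine le_antisymm ?_ (dTilde_ge_dist a _)
    calc dTilde a (⟨z, Path.Homotopic.Quotient.trans a.2 (Path.Homotopic.Quotient.mk β)⟩ : PathsFrom x₀) ≤ pathLen β :=
        iInf_le (fun γ : {γ : Path a.1 z // Path.Homotopic.Quotient.trans a.2
          (Path.Homotopic.Quotient.mk γ) = Path.Homotopic.Quotient.trans a.2
            (Path.Homotopic.Quotient.mk β)} => pathLen γ.1) ⟨β, rfl⟩
      _ = _ := hβ
  -- length computation
  refine le_antisymm ?_ ?_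
  · calc pathLen (⟨⟨F, hcont⟩, hsrc, htgt⟩ : Path a _)
        ≤ eVariationOn β Set.univ := by
          refine eVariationOn_le_of_edist_le fun x _ y _ => ?_
          rw [edist_dist, edist_dist]
          exact ENNReal.ofReal_le_ofReal (hdistb x y)
      _ = ENNReal.ofReal (dist a.1 z) := hβ
      _ = _ := hdaz.symm
  · have := eVariationOn.edist_le (⟨⟨F, hcont⟩, hsrc, htgt⟩ : Path a _)
      (Set.mem_univ (0:I)) (Set.mem_univ 1)
    rw [Path.source, Path.target, edist_dist] at this
    exact this

/-- the canonical lift of a geodesic in `X` is a geodesic in `X̃`. -/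
theorem stmt7 {X : Type*} [MetricSpace X] [CompactSpace X] [ConnectedSpace X]
    [LocallyConnectedSpace X] (hg : IsGeodesicSpace X)
    (hs : SemiLocallySimplyConnected X) (x₀ : X)
    (m : MetricSpace (PathsFrom x₀))
    (hm : ∀ a b : PathsFrom x₀,
      ENNReal.ofReal (letI := m; dist a b) = dTilde a b)
    (a : PathsFrom x₀) (z : X) (β : Path a.1 z)
    (hβ : pathLen β = ENNReal.ofReal (dist a.1 z)) :
    letI := m
    ∃ L : Path a (⟨z, Path.Homotopic.Quotient.trans a.2 (Path.Homotopic.Quotient.mk β)⟩ : PathsFrom x₀),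
      (∀ t : unitInterval, L t =
        ⟨β.extend t, Path.Homotopic.Quotient.trans a.2
          (Path.Homotopic.Quotient.mk ((β.truncate 0 t).cast (by rw [min_eq_left t.2.1, Path.extend_zero]) rfl))⟩) ∧
      pathLen L = ENNReal.ofReal (dist a (⟨z, Path.Homotopic.Quotient.trans a.2 (Path.Homotopic.Quotient.mk β)⟩ : PathsFrom x₀)) := by
  letI := m
  exact stmt7aux hm a z β hβ
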